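/- Let k ≥ 2 and n ≥ 1 be natural numbers with n < k/2 − k/(2·ln k). Then n < ln(k!)/(2·ln k), and hence for every family of k points d₁, …, d_k in ℝⁿ there exists a permutation π of {1, …, k} such that no point q ∈ ℝⁿ satisfies ‖q − d_{π(1)}‖₂ < ‖q − d_{π(2)}‖₂ < ⋯ < ‖q − d_{π(k)}‖₂. In particular, the embedding dimension of a dual encoder must grow linearly in the corpus size k in order to solve a complete ranking task. -/

import Mathlib

open Finset

namespace DEaux

open scoped Classical

/-- value of the affine function with linear coefficients `a i` and constant `b i`. -/
def fval {N m : ℕ} (a : Fin m → Fin N → ℝ) (b : Fin m → ℝ) (i : Fin m) (x : Fin N → ℝ) : ℝ :=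
  (∑ j, a i j * x j) + b i

def Realizes {N m : ℕ} (a : Fin m → Fin N → ℝ) (b : Fin m → ℝ) (x : Fin N → ℝ)
    (σ : Fin m → Bool) : Prop :=
  ∀ i, if σ i then 0 < fval a b i x else fval a b i x < 0

noncomputable def patterns {N m : ℕ} (a : Fin m → Fin N → ℝ) (b : Fin m → ℝ) :
    Finset (Fin m → Bool) :=
  Finset.univ.filter fun σ => ∃ x, Realizes a b x σ

lemma mem_patterns {N m : ℕ} {a : Fin m → Fin N → ℝ} {b : Fin m → ℝ} {σ : Fin m → Bool} :
    σ ∈ patterns a b ↔ ∃ x, Realizes a b x σ := by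
  simp [patterns]

lemma fval_affine {N m : ℕ} (a : Fin m → Fin N → ℝ) (b : Fin m → ℝ) (i : Fin m)
    (t : ℝ) (u v : Fin N → ℝ) :
    fval a b i (fun l => (1 - t) * u l + t * v l)
      = (1 - t) * fval a b i u + t * fval a b i v := by
  have h : ∀ l, a i l * ((1 - t) * u l + t * v l)
      = (1 - t) * (a i l * u l) + t * (a i l * v l) := fun l => by ring
  simp only [fval, h, Finset.sum_add_distrib, ← Finset.mul_sum]
  ring

lemma fval_restrict {N m : ℕ} (a : Fin (m+1) → Fin (N+1) → ℝ) (b : Fin (m+1) → ℝ)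
    (j : Fin (N+1)) (hj : a (Fin.last m) j ≠ 0) (z : Fin (N+1) → ℝ)
    (hz : fval a b (Fin.last m) z = 0) (i : Fin m) :
    fval (fun i l => a i.castSucc (j.succAbove l)
            - a i.castSucc j * a (Fin.last m) (j.succAbove l) / a (Fin.last m) j)
         (fun i => b i.castSucc - a i.castSucc j * b (Fin.last m) / a (Fin.last m) j)
         i (fun l => z (j.succAbove l))
    = fval a b i.castSucc z := by
  have hsplit : ∀ (c : Fin (N+1) → ℝ),
      ∑ p, c p * z p = c j * z j + ∑ l, c (j.succAbove l) * z (j.succAbove l) :=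
    fun c => Fin.sum_univ_succAbove (fun p => c p * z p) j
  simp only [fval] at hz ⊢
  rw [hsplit] at hz
  rw [hsplit]
  have hsum : ∑ l, (a i.castSucc (j.succAbove l)
        - a i.castSucc j * a (Fin.last m) (j.succAbove l) / a (Fin.last m) j) * z (j.succAbove l)
      = (∑ l, a i.castSucc (j.succAbove l) * z (j.succAbove l))
        - (a i.castSucc j / a (Fin.last m) j)
            * ∑ l, a (Fin.last m) (j.succAbove l) * z (j.succAbove l) := by
    rw [Finset.mul_sum, ← Finset.sum_sub_distrib]
    refine Finset.sum_congr rfl fun l _ => by ring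
  rw [hsum]
  field_simp
  linear_combination (- a i.castSucc j) * hz


theorem card_patterns_le (N : ℕ) : ∀ (m : ℕ) (a : Fin m → Fin N → ℝ) (b : Fin m → ℝ),
    (patterns a b).card ≤ (m + 1) ^ N := by
  induction N with
  | zero =>
    intro m a b
    simp only [pow_zero]
    refine Finset.card_le_one.2 ?_
    intro σ hσ τ hτ
    obtain ⟨x, hx⟩ := mem_patterns.1 hσ
    obtain ⟨y, hy⟩ := mem_patterns.1 hτ
    have hxy : x = y := Subsingleton.elim x y
    subst hxy
    funext i
    have h1 := hx i
    have h2 := hy i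
    by_cases h : σ i <;> by_cases h' : τ i <;>
      simp [h, h'] at h1 h2 ⊢ <;> linarith
  | succ N IHN =>
    intro m
    induction m with
    | zero =>
      intro a b
      calc (patterns a b).card ≤ (Finset.univ : Finset (Fin 0 → Bool)).card :=
            Finset.card_filter_le _ _
        _ ≤ (0 + 1) ^ (N + 1) := by simp
    | succ m IHm =>
      intro a b
      set L := Fin.last m with hL
      -- restricted family (drop last function)
      set aC : Fin m → Fin (N+1) → ℝ := fun i => a i.castSucc with haC
      set bC : Fin m → ℝ := fun i => b i.castSucc with hbC
      have hfvalC : ∀ (i : Fin m) (x), fval aC bC i x = fval a b i.castSucc x := fun i x => rfl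
      have hrestr : ∀ (x) (σ : Fin (m+1) → Bool),
          Realizes a b x σ → Realizes aC bC x (Fin.init σ) := by
        intro x σ hx i
        have := hx i.castSucc
        rwa [hfvalC]
      by_cases ha : a L = 0
      · -- last function is constant: restriction is injective on patterns
        have hinj : Set.InjOn Fin.init (patterns a b : Set (Fin (m+1) → Bool)) := by
          intro σ hσ τ hτ hst
          obtain ⟨x, hx⟩ := mem_patterns.1 hσ
          obtain ⟨y, hy⟩ := mem_patterns.1 hτ
          have hfx : fval a b L x = b L := by simp [fval, ha]
          have hfy : fval a b L y = b L := by simp [fval, ha]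
          have hlast : σ L = τ L := by
            have h1 := hx L; have h2 := hy L
            rw [hfx] at h1; rw [hfy] at h2
            by_cases h : σ L <;> by_cases h' : τ L <;>
              simp [h, h'] at h1 h2 ⊢ <;> linarith
          have := Fin.snoc_init_self σ
          rw [← Fin.snoc_init_self σ, ← Fin.snoc_init_self τ, hst, hlast]
        have hmap : ∀ σ ∈ patterns a b, Fin.init σ ∈ patterns aC bC := by
          intro σ hσ
          obtain ⟨x, hx⟩ := mem_patterns.1 hσ
          exact mem_patterns.2 ⟨x, hrestr x σ hx⟩
        calc (patterns a b).card ≤ (patterns aC bC).card :=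
              Finset.card_le_card_of_injOn _ hmap hinj
          _ ≤ (m + 1) ^ (N + 1) := IHm aC bC
          _ ≤ (m + 1 + 1) ^ (N + 1) := Nat.pow_le_pow_left (by omega) _
      · -- last function is genuinely affine: split by last sign
        obtain ⟨j, hj⟩ := Function.ne_iff.1 ha
        simp only [Pi.zero_apply] at hj
        set a' : Fin m → Fin N → ℝ := fun i l => a i.castSucc (j.succAbove l)
            - a i.castSucc j * a L (j.succAbove l) / a L j with ha'
        set b' : Fin m → ℝ := fun i => b i.castSucc - a i.castSucc j * b L / a L j with hb'
        set St := (patterns a b).filter (fun σ => σ L = true) with hSt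
        set Sf := (patterns a b).filter (fun σ => σ L = false) with hSf
        have hsplitcard : St.card + Sf.card = (patterns a b).card := by
          rw [hSt, hSf]
          have := Finset.card_filter_add_card_filter_not
            (s := patterns a b) (p := fun σ => σ L = true)
          simpa using this
        have hinj2 : ∀ (s : Bool), Set.InjOn Fin.init
            (((patterns a b).filter (fun σ => σ L = s)) : Set (Fin (m+1) → Bool)) := by
          intro s σ hσ τ hτ hst
          simp only [Finset.coe_filter, Set.mem_setOf_eq] at hσ hτ
          rw [← Fin.snoc_init_self σ, ← Fin.snoc_init_self τ, hst, hσ.2, hτ.2]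
        set P := St.image Fin.init with hP
        set Q := Sf.image Fin.init with hQ
        have hcardP : P.card = St.card := Finset.card_image_of_injOn (hinj2 true)
        have hcardQ : Q.card = Sf.card := Finset.card_image_of_injOn (hinj2 false)
        have hPQsub : P ∪ Q ⊆ patterns aC bC := by
          intro τ hτ
          rcases Finset.mem_union.1 hτ with h | h <;>
          · obtain ⟨σ, hσ, rfl⟩ := Finset.mem_image.1 h
            have hσ' := (Finset.mem_filter.1 hσ).1
            obtain ⟨x, hx⟩ := mem_patterns.1 hσ'
            exact mem_patterns.2 ⟨x, hrestr x σ hx⟩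
        have hPQint : P ∩ Q ⊆ patterns a' b' := by
          intro τ hτ
          obtain ⟨hτP, hτQ⟩ := Finset.mem_inter.1 hτ
          obtain ⟨σp, hσp, hτp⟩ := Finset.mem_image.1 hτP
          obtain ⟨σm, hσm, hτm⟩ := Finset.mem_image.1 hτQ
          obtain ⟨hσpS, hσpL⟩ := Finset.mem_filter.1 hσp
          obtain ⟨hσmS, hσmL⟩ := Finset.mem_filter.1 hσm
          obtain ⟨x, hx⟩ := mem_patterns.1 hσpS
          obtain ⟨y, hy⟩ := mem_patterns.1 hσmS
          have hpx : 0 < fval a b L x := by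
            have := hx L; rw [hσpL] at this; simpa using this
          have hqy : fval a b L y < 0 := by
            have := hy L; rw [hσmL] at this; simpa using this
          set p := fval a b L x with hp
          set q := fval a b L y with hq
          set t : ℝ := p / (p - q) with ht
          have hpq : 0 < p - q := by linarith
          have ht0 : 0 < t := div_pos hpx hpq
          have ht1 : t < 1 := (div_lt_one hpq).2 (by linarith)
          set z : Fin (N+1) → ℝ := fun l => (1 - t) * x l + t * y l with hzdef
          have hzv : ∀ i, fval a b i z = (1 - t) * fval a b i x + t * fval a b i y :=
            fun i => fval_affine a b i t x y
          have hzL : fval a b L z = 0 := by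
            rw [hzv L, ← hp, ← hq, ht]
            field_simp
            ring
          have hsign : ∀ i : Fin m,
              if τ i then 0 < fval a b i.castSucc z else fval a b i.castSucc z < 0 := by
            intro i
            have h1 := hx i.castSucc
            have h2 := hy i.castSucc
            have e1 : σp i.castSucc = τ i := by rw [← hτp]; rfl
            have e2 : σm i.castSucc = τ i := by rw [← hτm]; rfl
            rw [e1] at h1; rw [e2] at h2
            rw [hzv i.castSucc]
            by_cases h : τ i <;> simp [h] at h1 h2 ⊢ <;> nlinarith
          refine mem_patterns.2 ⟨fun l => z (j.succAbove l), fun i => ?_⟩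
          rw [show fval a' b' i (fun l => z (j.succAbove l)) = fval a b i.castSucc z from
            fval_restrict a b j hj z hzL i]
          exact hsign i
        calc (patterns a b).card = St.card + Sf.card := hsplitcard.symm
          _ = P.card + Q.card := by rw [hcardP, hcardQ]
          _ = (P ∪ Q).card + (P ∩ Q).card := (Finset.card_union_add_card_inter P Q).symm
          _ ≤ (m + 1) ^ (N + 1) + (m + 1) ^ N := by
              gcongr
              · exact le_trans (Finset.card_le_card hPQsub) (IHm aC bC)
              · exact le_trans (Finset.card_le_card hPQint) (IHN m a' b')
          _ ≤ (m + 1 + 1) ^ (N + 1) := by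
              have h1 : (m + 1) ^ N ≤ (m + 2) ^ N := Nat.pow_le_pow_left (by omega) N
              calc (m + 1) ^ (N + 1) + (m + 1) ^ N = (m + 2) * (m + 1) ^ N := by ring
                _ ≤ (m + 2) * (m + 2) ^ N := Nat.mul_le_mul_left _ h1
                _ = (m + 1 + 1) ^ (N + 1) := by ring


lemma log_factorial_lower (k : ℕ) (hk : 2 ≤ k) :
    (k : ℝ) * Real.log k - k ≤ Real.log (Nat.factorial k) := by
  have hfk : (0:ℝ) < (Nat.factorial k : ℝ) := by exact_mod_cast Nat.factorial_pos k
  have hexp : ((k:ℝ)) ^ k / (Nat.factorial k : ℝ) ≤ Real.exp k := by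
    refine le_trans ?_ (Real.sum_le_exp_of_nonneg (x := (k:ℝ)) (by positivity) (k+1))
    exact Finset.single_le_sum (f := fun i => (k:ℝ) ^ i / (Nat.factorial i : ℝ))
      (fun i _ => by positivity) (Finset.self_mem_range_succ k)
  have h2 : ((k:ℝ)) ^ k ≤ (Nat.factorial k : ℝ) * Real.exp k := by
    rw [div_le_iff₀ hfk] at hexp
    linarith [hexp]
  have h3 := Real.log_le_log (by positivity) h2
  rw [Real.log_pow, Real.log_mul hfk.ne' (Real.exp_pos _).ne', Real.log_exp] at h3
  linarith


end DEaux

open DEaux in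
/-- If `k ≥ 2`, `n ≥ 1` and `n < k/2 − k/(2 ln k)`, then
`n < ln(k!)/(2 ln k)`, and hence for every family of `k` points in `ℝⁿ` there is a
permutation `π` not realized as a distance permutation by any query point `q ∈ ℝⁿ`.
In particular, the embedding dimension of a dual encoder must grow linearly in the
corpus size `k` in order to solve a complete ranking task. -/
theorem de_dimension_grows_linearly
    (k n : ℕ) (hk : 2 ≤ k) (hn : 1 ≤ n)
    (hdim : (n : ℝ) < (k : ℝ) / 2 - (k : ℝ) / (2 * Real.log k)) :
    (n : ℝ) < Real.log (Nat.factorial k) / (2 * Real.log k) ∧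
    ∀ d : Fin k → EuclideanSpace ℝ (Fin n),
      ∃ π : Equiv.Perm (Fin k),
        ¬ ∃ q : EuclideanSpace ℝ (Fin n),
            StrictMono (fun i : Fin k => ‖q - d (π i)‖) := by
  have hlogk : (0:ℝ) < Real.log k := Real.log_pos (by exact_mod_cast hk)
  have hfact := log_factorial_lower k hk
  have part1 : (n:ℝ) < Real.log (Nat.factorial k) / (2 * Real.log k) := by
    have heq : (k:ℝ)/2 - (k:ℝ)/(2*Real.log k) = ((k:ℝ)*Real.log k - k)/(2*Real.log k) := by
      field_simp
    rw [heq] at hdim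
    refine lt_of_lt_of_le hdim ?_
    gcongr
  refine ⟨part1, ?_⟩
  intro d
  by_contra hcon
  push_neg at hcon
  choose q hq using hcon
  classical
  -- index type for off-diagonal pairs
  set ι := {p : Fin k × Fin k // p.1 ≠ p.2} with hι
  set M := Fintype.card ι with hM
  set e : Fin M ≃ ι := (Fintype.equivFin ι).symm with he
  set A : Fin M → Fin n → ℝ := fun pp l => 2 * (d (e pp).1.1 l - d (e pp).1.2 l) with hA
  set B : Fin M → ℝ := fun pp => ∑ l, ((d (e pp).1.2 l)^2 - (d (e pp).1.1 l)^2) with hB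
  have hnorm : ∀ (u w : EuclideanSpace ℝ (Fin n)), ‖u - w‖^2 = ∑ l, (u l - w l)^2 := by
    intro u w
    rw [EuclideanSpace.norm_eq, Real.sq_sqrt (by positivity)]
    refine Finset.sum_congr rfl fun l _ => ?_
    rw [PiLp.sub_apply, Real.norm_eq_abs, sq_abs]
  have hval : ∀ (pp : Fin M) (x : EuclideanSpace ℝ (Fin n)),
      fval A B pp (fun l => x l)
        = ‖x - d (e pp).1.2‖^2 - ‖x - d (e pp).1.1‖^2 := by
    intro pp x
    rw [hnorm, hnorm]
    simp only [fval, hA, hB]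
    rw [← Finset.sum_add_distrib, ← Finset.sum_sub_distrib]
    refine Finset.sum_congr rfl fun l _ => by ring
  have hcmp : ∀ (pp : Fin M) (x : EuclideanSpace ℝ (Fin n)),
      (0 < fval A B pp (fun l => x l) ↔ ‖x - d (e pp).1.1‖ < ‖x - d (e pp).1.2‖) := by
    intro pp x
    rw [hval, sub_pos]
    constructor
    · intro h
      exact lt_of_pow_lt_pow_left₀ 2 (norm_nonneg _) h
    · intro h
      exact pow_lt_pow_left₀ h (norm_nonneg _) (by norm_num)
  have hcmp' : ∀ (pp : Fin M) (x : EuclideanSpace ℝ (Fin n)),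
      (fval A B pp (fun l => x l) < 0 ↔ ‖x - d (e pp).1.2‖ < ‖x - d (e pp).1.1‖) := by
    intro pp x
    rw [hval, sub_neg]
    constructor
    · intro h
      exact lt_of_pow_lt_pow_left₀ 2 (norm_nonneg _) h
    · intro h
      exact pow_lt_pow_left₀ h (norm_nonneg _) (by norm_num)
  -- distinct documents have distinct distances to any of the chosen query points
  have hinjd : ∀ (π : Equiv.Perm (Fin k)) (s t : Fin k), s ≠ t →
      ‖q π - d s‖ ≠ ‖q π - d t‖ := by
    intro π s t hst heq
    have h2 : (fun i => ‖q π - d (π i)‖) (π.symm s) = (fun i => ‖q π - d (π i)‖) (π.symm t) := by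
      simp only [Equiv.apply_symm_apply]
      exact heq
    have := (hq π).injective h2
    exact hst (by rw [← π.apply_symm_apply s, ← π.apply_symm_apply t, this])
  set Φ : Equiv.Perm (Fin k) → (Fin M → Bool) :=
    fun π pp => decide (‖q π - d (e pp).1.1‖ < ‖q π - d (e pp).1.2‖) with hΦ
  have hΦmem : ∀ π, Φ π ∈ patterns A B := by
    intro π
    refine mem_patterns.2 ⟨fun l => q π l, fun pp => ?_⟩
    by_cases hss : ‖q π - d (e pp).1.1‖ < ‖q π - d (e pp).1.2‖
    · have hT : Φ π pp = true := by simp [hΦ, hss]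
      rw [hT, if_pos rfl]
      exact (hcmp pp (q π)).2 hss
    · have hT : Φ π pp = false := by simp [hΦ, hss]
      rw [hT]
      simp only [Bool.false_eq_true, if_false]
      have hne := hinjd π (e pp).1.1 (e pp).1.2 (e pp).2
      have hlt : ‖q π - d (e pp).1.2‖ < ‖q π - d (e pp).1.1‖ :=
        (hne.lt_or_gt).resolve_left hss
      exact (hcmp' pp (q π)).2 hlt
  have hΦinj : Function.Injective Φ := by
    intro π ρ hpr
    have hmono : StrictMono (fun i => ρ.symm (π i)) := by
      intro i i' hii
      have hne : π i ≠ π i' := fun hc => absurd (π.injective hc) (ne_of_lt hii)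
      set pp := e.symm ⟨(π i, π i'), hne⟩ with hpp
      have hepp : (e pp).1 = (π i, π i') := by rw [hpp, Equiv.apply_symm_apply]
      have hT : Φ π pp = true := by
        simp only [hΦ, hepp, decide_eq_true_eq]
        exact hq π hii
      have hT2 : ‖q ρ - d (π i)‖ < ‖q ρ - d (π i')‖ := by
        have := hT
        rw [hpr] at this
        simpa only [hΦ, hepp, decide_eq_true_eq] using this
      rcases lt_trichotomy (ρ.symm (π i)) (ρ.symm (π i')) with h | h | h
      · exact h
      · exact absurd (ρ.symm.injective h) hne
      · exfalso
        have := hq ρ h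
        simp only [Equiv.apply_symm_apply] at this
        exact absurd hT2 (asymm this)
    have hsurj : Function.Surjective (fun i => ρ.symm (π i)) :=
      (π.trans ρ.symm).surjective
    have hid : (fun i => ρ.symm (π i)) = id :=
      (hmono.range_inj strictMono_id).1 (by rw [hsurj.range_eq, Set.range_id])
    refine Equiv.ext fun i => ?_
    have h5 := congrFun hid i
    simp only [id_eq] at h5
    have h6 := congrArg ρ h5
    rwa [Equiv.apply_symm_apply] at h6
  -- cardinality contradiction
  have hcard1 : Nat.factorial k ≤ (patterns A B).card := by
    have h := Finset.card_le_card_of_injOn (s := (Finset.univ : Finset (Equiv.Perm (Fin k))))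
      Φ (fun π _ => hΦmem π) (hΦinj.injOn)
    simpa [Fintype.card_perm] using h
  have hcard2 : (patterns A B).card ≤ (M + 1) ^ n := card_patterns_le n M A B
  have hMk : M + 1 ≤ k * k := by
    have hlt : M < Fintype.card (Fin k × Fin k) :=
      Fintype.card_subtype_lt (x := ((⟨0, by omega⟩ : Fin k), (⟨0, by omega⟩ : Fin k)))
        (by simp)
    simp only [Fintype.card_prod, Fintype.card_fin] at hlt
    omega
  have hfin : Nat.factorial k ≤ k ^ (2 * n) := by
    refine le_trans hcard1 (le_trans hcard2 ?_)
    calc (M + 1) ^ n ≤ (k * k) ^ n := Nat.pow_le_pow_left hMk n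
      _ = k ^ (2 * n) := by rw [show k * k = k ^ 2 by ring, ← pow_mul]
  have hklt : (k:ℝ) ^ (2 * n) < (Nat.factorial k : ℝ) := by
    have h2l : Real.log ((k:ℝ) ^ (2 * n)) < Real.log (Nat.factorial k) := by
      rw [Real.log_pow]
      have h7 := (lt_div_iff₀ (by positivity : (0:ℝ) < 2 * Real.log k)).1 part1
      push_cast
      nlinarith [h7]
    exact (Real.log_lt_log_iff (by positivity)
      (by exact_mod_cast Nat.factorial_pos k)).1 h2l
  have : ((Nat.factorial k : ℝ)) ≤ (k:ℝ) ^ (2 * n) := by exact_mod_cast hfin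
  linarith
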